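/- Let t be an n-ary idempotent polymorphism of the digraph D. Then there exists a nonempty subset I ⊆ {1,…,n} such that for all a₁,…,aₙ ∈ {0,1,2}: t(a₁,…,aₙ) = 2 if and only if aᵢ = 2 for all i ∈ I. In particular, the restriction of t to {0,2}ⁿ takes values in {0,2} and equals the operation (a₁,…,aₙ) ↦ min_{i∈I} aᵢ on the two-element chain 0 < 2. -/
import Mathlib


namespace DigraphHM10

/-- `f` is a polymorphism of the digraph `(V, E)`. -/
def IsPoly {V : Type*} (E : V → V → Prop) {n : ℕ} (f : (Fin n → V) → V) : Prop :=
  ∀ a b : Fin n → V, (∀ i, E (a i) (b i)) → E (f a) (f b)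

/-- `f` is idempotent. -/
def IsIdem {V : Type*} {n : ℕ} (f : (Fin n → V) → V) : Prop :=
  ∀ x : V, f (fun _ => x) = x

/-- The reflexive digraph `D` on `{0,1,2}` with non-loop edges
`0 → 1`, `1 → 0`, `1 → 2`, `2 → 0`. -/
def DEdge : Fin 3 → Fin 3 → Prop := fun a b =>
  a = b ∨ (a = 0 ∧ b = 1) ∨ (a = 1 ∧ b = 0) ∨ (a = 1 ∧ b = 2) ∨ (a = 2 ∧ b = 0)

instance : ∀ a b : Fin 3, Decidable (DEdge a b) := fun a b => by
  unfold DEdge; infer_instance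

section Aux

variable {n : ℕ} (t : (Fin n → Fin 3) → Fin 3)

/-- the 0/2 indicator vector of a set of coordinates -/
def vv (A : Finset (Fin n)) : Fin n → Fin 3 := fun i => if i ∈ A then 2 else 0

lemma dedge_two_left : ∀ x : Fin 3, DEdge 2 x → x = 0 ∨ x = 2 := by decide

lemma dedge_two_right : ∀ x : Fin 3, DEdge x 2 → x = 1 ∨ x = 2 := by decide

lemma fin3_cases : ∀ x : Fin 3, x = 0 ∨ x = 1 ∨ x = 2 := by decide

lemma combine2 : ∀ x : Fin 3, (x = 0 ∨ x = 2) → (x = 1 ∨ x = 2) → x = 2 := by decide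

variable (hpoly : IsPoly DEdge t) (hidem : IsIdem t)

include hpoly in
/-- if `b → a` componentwise and `t b = 2` then `t a ∈ {0, 2}` -/
lemma dom2 (a b : Fin n → Fin 3) (he : ∀ i, DEdge (b i) (a i)) (hb : t b = 2) :
    t a = 0 ∨ t a = 2 := by
  have h := hpoly b a he
  rw [hb] at h
  exact dedge_two_left _ h

include hpoly in
/-- if `a → b` componentwise and `t b = 2` then `t a ∈ {1, 2}` -/
lemma sub2 (a b : Fin n → Fin 3) (he : ∀ i, DEdge (a i) (b i)) (hb : t b = 2) :
    t a = 1 ∨ t a = 2 := by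
  have h := hpoly a b he
  rw [hb] at h
  exact dedge_two_right _ h

include hpoly hidem in
lemma t02 (a : Fin n → Fin 3) (h : ∀ i, a i = 0 ∨ a i = 2) : t a = 0 ∨ t a = 2 := by
  refine dom2 t hpoly a (fun _ => 2) (fun i => ?_) (hidem 2)
  rcases h i with h' | h' <;> rw [h']
  · exact (by decide : DEdge 2 0)
  · exact (by decide : DEdge 2 2)

include hidem in
lemma tvv_univ : t (vv Finset.univ) = 2 := by
  have : vv (Finset.univ : Finset (Fin n)) = fun _ => 2 := by
    funext i; simp [vv]
  rw [this]; exact hidem 2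

include hpoly hidem in
lemma tvv_up {A B : Finset (Fin n)} (hAB : A ⊆ B) (hA : t (vv A) = 2) : t (vv B) = 2 := by
  have h1 : t (vv B) = 0 ∨ t (vv B) = 2 := by
    refine t02 t hpoly hidem _ (fun i => ?_)
    unfold vv; split <;> simp
  have h2 : t (vv B) = 1 ∨ t (vv B) = 2 := by
    refine sub2 t hpoly (vv B) (vv A) (fun i => ?_) hA
    unfold vv
    by_cases hiA : i ∈ A
    · simp [hiA, hAB hiA]; decide
    · by_cases hiB : i ∈ B <;> simp [hiA, hiB] <;> decide
  exact combine2 _ h1 h2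

include hpoly hidem in
lemma tvv_inter {A B : Finset (Fin n)} (hA : t (vv A) = 2) (hB : t (vv B) = 2) :
    t (vv (A ∩ B)) = 2 := by
  classical
  set u : Fin n → Fin 3 := fun i => if i ∈ A ∩ B then 2 else if i ∈ A then 1 else 0 with hu
  have hu2 : t u = 2 := by
    have h1 : t u = 0 ∨ t u = 2 := by
      refine dom2 t hpoly u (vv B) (fun i => ?_) hB
      simp only [hu, vv, Finset.mem_inter]
      by_cases hiA : i ∈ A <;> by_cases hiB : i ∈ B <;> simp [hiA, hiB] <;> decide
    have h2 : t u = 1 ∨ t u = 2 := by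
      refine sub2 t hpoly u (vv A) (fun i => ?_) hA
      simp only [hu, vv, Finset.mem_inter]
      by_cases hiA : i ∈ A <;> by_cases hiB : i ∈ B <;> simp [hiA, hiB] <;> decide
    exact combine2 _ h1 h2
  have h1 : t (vv (A ∩ B)) = 0 ∨ t (vv (A ∩ B)) = 2 := by
    refine t02 t hpoly hidem _ (fun i => ?_)
    unfold vv; split <;> simp
  have h2 : t (vv (A ∩ B)) = 1 ∨ t (vv (A ∩ B)) = 2 := by
    refine sub2 t hpoly (vv (A ∩ B)) u (fun i => ?_) hu2
    simp only [hu, vv, Finset.mem_inter]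
    by_cases hiA : i ∈ A <;> by_cases hiB : i ∈ B <;> simp [hiA, hiB] <;> decide
  exact combine2 _ h1 h2

end Aux

/-- Every `n`-ary idempotent polymorphism `t` of `D` has a nonempty set `I` of
coordinates such that `t(a) = 2` iff `aᵢ = 2` for all `i ∈ I`; in particular, the
restriction of `t` to `{0,2}ⁿ` takes values in `{0,2}` and equals the operation
`a ↦ min_{i ∈ I} aᵢ` on the two-element chain `0 < 2`. -/
theorem idem_poly_of_D_is_semilattice_term {n : ℕ}
    (t : (Fin n → Fin 3) → Fin 3) (hpoly : IsPoly DEdge t) (hidem : IsIdem t) :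
    ∃ I : Finset (Fin n), I.Nonempty ∧
      (∀ a : Fin n → Fin 3, (t a = 2 ↔ ∀ i ∈ I, a i = 2)) ∧
      (∀ a : Fin n → Fin 3, (∀ i, a i = 0 ∨ a i = 2) →
        (t a = 0 ∨ t a = 2) ∧
        t a = if ∀ i ∈ I, a i = 2 then (2 : Fin 3) else 0) := by
  classical
  -- the family of "accepted" 0/2-sets
  set S : Finset (Finset (Fin n)) :=
    Finset.univ.filter (fun A => t (vv A) = 2) with hS
  have hSuniv : Finset.univ ∈ S := by
    simp [hS, tvv_univ t hidem]
  obtain ⟨B, hBS, hBmin⟩ := Finset.exists_min_image S (fun A => A.card) ⟨_, hSuniv⟩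
  have hBmem : t (vv B) = 2 := by simpa [hS] using hBS
  -- B is contained in every accepted set
  have hBsub : ∀ A : Finset (Fin n), t (vv A) = 2 → B ⊆ A := by
    intro A hA
    have hinter : t (vv (B ∩ A)) = 2 := tvv_inter t hpoly hidem hBmem hA
    have hmemS : B ∩ A ∈ S := by simp [hS, hinter]
    have hcard : B.card ≤ (B ∩ A).card := hBmin _ hmemS
    have : B ∩ A = B :=
      Finset.eq_of_subset_of_card_le (Finset.inter_subset_left) (by omega)
    exact Finset.inter_eq_left.mp this
  -- key characterization
  have hkey : ∀ a : Fin n → Fin 3, (t a = 2 ↔ ∀ i ∈ B, a i = 2) := by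
    intro a
    set A : Finset (Fin n) := Finset.univ.filter (fun i => a i = 2) with hAdef
    have hvvA_a : ∀ i, DEdge (vv A i) (a i) := by
      intro i
      simp only [vv, hAdef, Finset.mem_filter, Finset.mem_univ, true_and]
      rcases fin3_cases (a i) with h | h | h <;> rw [h] <;> simp <;> decide
    constructor
    · intro h2
      have h1 : t (vv A) = 0 ∨ t (vv A) = 2 := by
        refine t02 t hpoly hidem _ (fun i => ?_)
        unfold vv; split <;> simp
      have h3 : t (vv A) = 1 ∨ t (vv A) = 2 := sub2 t hpoly _ a hvvA_a h2
      have hA2 : t (vv A) = 2 := combine2 _ h1 h3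
      intro i hiB
      have := hBsub A hA2 hiB
      simpa [hAdef] using this
    · intro h
      have hBA : B ⊆ A := by
        intro i hi
        simp [hAdef, h i hi]
      have hA2 : t (vv A) = 2 := tvv_up t hpoly hidem hBA hBmem
      set b : Fin n → Fin 3 := fun i => if a i = 2 then 2 else 1 with hb
      have hb2 : t b = 2 := by
        have h1 : t b = 0 ∨ t b = 2 := by
          refine dom2 t hpoly b (vv A) (fun i => ?_) hA2
          simp only [hb, vv, hAdef, Finset.mem_filter, Finset.mem_univ, true_and]
          by_cases h' : a i = 2 <;> simp [h'] <;> decide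
        have h2 : t b = 1 ∨ t b = 2 := by
          refine sub2 t hpoly b (vv A) (fun i => ?_) hA2
          simp only [hb, vv, hAdef, Finset.mem_filter, Finset.mem_univ, true_and]
          by_cases h' : a i = 2 <;> simp [h'] <;> decide
        exact combine2 _ h1 h2
      have h1 : t a = 0 ∨ t a = 2 := dom2 t hpoly a (vv A) hvvA_a hA2
      have h2 : t a = 1 ∨ t a = 2 := by
        refine sub2 t hpoly a b (fun i => ?_) hb2
        simp only [hb]
        rcases fin3_cases (a i) with h' | h' | h' <;> rw [h'] <;> simp <;> decide
      exact combine2 _ h1 h2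
  refine ⟨B, ?_, hkey, ?_⟩
  · -- nonempty: otherwise t (vv ∅) = t (const 0) = 0 ≠ 2
    rw [Finset.nonempty_iff_ne_empty]
    intro hBempty
    have : vv B = fun _ => (0 : Fin 3) := by
      funext i; simp [vv, hBempty]
    rw [this, hidem 0] at hBmem
    exact absurd hBmem (by decide)
  · intro a h02
    have h1 : t a = 0 ∨ t a = 2 := t02 t hpoly hidem a h02
    refine ⟨h1, ?_⟩
    split
    · exact (hkey a).mpr (by assumption)
    · rcases h1 with h | h
      · exact h
      · exact absurd ((hkey a).mp h) (by assumption)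

end DigraphHM10
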